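/- Let f : ℝ^n → ℝ be measurable, k a nonnegative integer, and suppose f is approximately differentiable of order k at almost every point of ℝ^n. For h ∈ ℕ, h ≥ 1, let f_h be the truncation of f at level h (f_h = f where −h < f < h, f_h = h where f ≥ h, f_h = −h where f ≤ −h). Suppose that for every h there exist measurable functions a_J^h : ℝ^n → ℝ, for multi-indices |J| ≤ k, such that for almost every x₀ ∈ ℝ^n the function f_h is approximately differentiable of order k at x₀ with polynomial x ↦ Σ_{|J| ≤ k} a_J^h(x₀)(x − x₀)^J. Then there exist measurable functions a_J : ℝ^n → ℝ, |J| ≤ k, such that for almost every x₀ ∈ ℝ^n, f is approximately differentiable of order k at x₀ with polynomial x ↦ Σ_{|J| ≤ k} a_J(x₀)(x − x₀)^J. (This is the paper's Lemma 4.5/boundedness-reduction lemma specialized to the abelian Carnot group ℝ^n.) -/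

import Mathlib

open MeasureTheory Metric Filter Topology

noncomputable section

/-- `ℝ^n` with the Euclidean norm. -/
abbrev Euc (n : ℕ) := EuclideanSpace ℝ (Fin n)

/-- A set `S ⊆ ℝ^n` has density one at `x` if
`vol(S ∩ B(x,r))/vol(B(x,r)) → 1` as `r → 0⁺`. -/
def DensityOneAt {n : ℕ} (S : Set (Euc n)) (x : Euc n) : Prop :=
  Tendsto (fun r : ℝ => volume (S ∩ ball x r) / volume (ball x r))
    (nhdsWithin 0 (Set.Ioi 0)) (nhds 1)

/-- A set has density zero at `x` if its complement has density one at `x`. -/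
def DensityZeroAt {n : ℕ} (S : Set (Euc n)) (x : Euc n) : Prop :=
  DensityOneAt Sᶜ x

/-- Degree `|J|` of a multi-index. -/
def mdeg {n : ℕ} (J : Fin n → ℕ) : ℕ := ∑ i, J i

/-- Monomial `x^J = x₁^{j₁} ⋯ xₙ^{jₙ}`. -/
def mpow {n : ℕ} (x : Euc n) (J : Fin n → ℕ) : ℝ := ∏ i, (x i) ^ (J i)

/-- `J! = j₁! ⋯ jₙ!`. -/
def Jfact {n : ℕ} (J : Fin n → ℕ) : ℕ := ∏ i, Nat.factorial (J i)

/-- `p : ℝ^n → ℝ` is a polynomial function of (total) degree at most `k`. -/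
def IsPolyFun (n k : ℕ) (p : Euc n → ℝ) : Prop :=
  ∃ P : MvPolynomial (Fin n) ℝ, P.totalDegree ≤ k ∧
    ∀ x : Euc n, p x = MvPolynomial.eval (fun i => x i) P

/-- `f : D → ℝ` is approximately differentiable of order `k` at `x₀` (a density point
of `D`) with polynomial `p`: `p` has degree at most `k` and for every `ε > 0` the set
`{x ∈ D : |f x − p x| > ε ‖x − x₀‖^k}` has density zero at `x₀`. -/
def ApproxDiffAt {n : ℕ} (k : ℕ) (D : Set (Euc n)) (f : Euc n → ℝ)
    (x₀ : Euc n) (p : Euc n → ℝ) : Prop :=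
  DensityOneAt D x₀ ∧ IsPolyFun n k p ∧
    ∀ ε : ℝ, 0 < ε →
      DensityZeroAt {x | x ∈ D ∧ ε * ‖x - x₀‖ ^ k < |f x - p x|} x₀

/-- `f : D → ℝ` has an approximate `(k−1)`-Taylor polynomial at `x₀` (a density point
of `D`) with polynomial `p`: `p` has degree at most `k−1` and there is `M > 0` such that
`{x ∈ D : |f x − p x| > M ‖x − x₀‖^k}` has density zero at `x₀`. -/
def HasApproxTaylorAt {n : ℕ} (k : ℕ) (D : Set (Euc n)) (f : Euc n → ℝ)
    (x₀ : Euc n) (p : Euc n → ℝ) : Prop :=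
  DensityOneAt D x₀ ∧ IsPolyFun n (k - 1) p ∧
    ∃ M : ℝ, 0 < M ∧
      DensityZeroAt {x | x ∈ D ∧ M * ‖x - x₀‖ ^ k < |f x - p x|} x₀

/-- The finset of multi-indices `J` with `|J| ≤ k`. -/
def multiIdxLe (n k : ℕ) : Finset (Fin n → ℕ) :=
  (Fintype.piFinset fun _ : Fin n => Finset.range (k+1)).filter fun J => mdeg J ≤ k

/-- The finset of multi-indices `J` with `|J| < k` (i.e. `|J| ≤ k−1`). -/
def multiIdxLt (n k : ℕ) : Finset (Fin n → ℕ) :=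
  (Fintype.piFinset fun _ : Fin n => Finset.range (k+1)).filter fun J => mdeg J < k

/-- Partial derivative `∂g/∂xᵢ` (as a line derivative in the direction `eᵢ`). -/
def pd {n : ℕ} (i : Fin n) (g : Euc n → ℝ) : Euc n → ℝ :=
  fun x => lineDeriv ℝ g x (EuclideanSpace.single i 1)

/-- The list of directions `(1,…,1,2,…,2,…)` (direction `i` repeated `J i` times)
encoding the iterated partial derivative `∂^{|J|}/∂x₁^{j₁}⋯∂xₙ^{jₙ}`. -/
def multiList (n : ℕ) (J : Fin n → ℕ) : List (Fin n) :=
  (List.finRange n).flatMap fun i => List.replicate (J i) i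

/-- Iterated partial derivatives along a list of coordinate directions
(the head of the list is the outermost derivative). -/
def iterD {n : ℕ} : List (Fin n) → (Euc n → ℝ) → (Euc n → ℝ)
  | [], g => g
  | i :: L, g => pd i (iterD L g)

/-- The iterated partial derivatives along the list `L` all exist at every point. -/
def iterDExists {n : ℕ} : List (Fin n) → (Euc n → ℝ) → Prop
  | [], _ => True
  | i :: L, g => iterDExists L g ∧
      ∀ x : Euc n, LineDifferentiableAt ℝ (iterD L g) x (EuclideanSpace.single i 1)

/-- `D^J u = ∂^{|J|}u/∂x₁^{j₁}⋯∂xₙ^{jₙ}`. -/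
def DJ {n : ℕ} (J : Fin n → ℕ) (u : Euc n → ℝ) : Euc n → ℝ := iterD (multiList n J) u

/-- The Taylor polynomial of `u` of degree `k−1` centered at `x₀`:
`P_{x₀}(y) = Σ_{|I| ≤ k−1} D^I u(x₀) (y − x₀)^I / I!`. -/
def TaylorPoly {n : ℕ} (k : ℕ) (u : Euc n → ℝ) (x₀ : Euc n) : Euc n → ℝ :=
  fun y => ∑ I ∈ multiIdxLt n k, DJ I u x₀ * mpow (y - x₀) I / (Jfact I : ℝ)

/-- `u` belongs to `Lip(k, ℝ^n)` with constant `M`: all partial derivatives `D^J u`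
with `|J| ≤ k−1` exist at every point, and for all such `J` and all `x, x₀`,
`|D^J u(x₀)| ≤ M` and `|D^J u(x) − D^J P_{x₀}(x)| ≤ M ‖x − x₀‖^{k−|J|}`. -/
def MemLip (n k : ℕ) (M : ℝ) (u : Euc n → ℝ) : Prop :=
  (∀ J : Fin n → ℕ, mdeg J < k → iterDExists (multiList n J) u) ∧
  ∀ J : Fin n → ℕ, mdeg J < k → ∀ x x₀ : Euc n,
    |DJ J u x₀| ≤ M ∧
    |DJ J u x - DJ J (TaylorPoly k u x₀) x| ≤ M * ‖x - x₀‖ ^ (k - mdeg J)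

/-- Truncation of `f` at level `h`: equals `f` where `−h < f < h`, equals `h` where
`f ≥ h`, and equals `−h` where `f ≤ −h`. -/
def trunc {n : ℕ} (h : ℕ) (f : Euc n → ℝ) : Euc n → ℝ :=
  fun x => if (h : ℝ) ≤ f x then (h : ℝ) else if f x ≤ -(h : ℝ) then -(h : ℝ) else f x


namespace Aux15

variable {n : ℕ}

lemma vol_ball_ne_zero (x : Euc n) {r : ℝ} (hr : 0 < r) : volume (ball x r) ≠ 0 :=
  (measure_ball_pos volume x hr).ne'

lemma vol_ball_ne_top (x : Euc n) (r : ℝ) : volume (ball x r) ≠ ⊤ :=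
  measure_ball_lt_top.ne

lemma vol_sphere (hn : 0 < n) (x : Euc n) (r : ℝ) : volume (sphere x r) = 0 := by
  have : Nonempty (Fin n) := ⟨⟨0, hn⟩⟩
  have : Nontrivial (Euc n) := inferInstance
  exact Measure.addHaar_sphere volume x r

lemma vol_inter_cb (hn : 0 < n) (S : Set (Euc n)) (x : Euc n) (r : ℝ) :
    volume (S ∩ closedBall x r) = volume (S ∩ ball x r) := by
  refine le_antisymm ?_ (measure_mono (Set.inter_subset_inter_right _ ball_subset_closedBall))
  rw [← ball_union_sphere, Set.inter_union_distrib_left]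
  refine le_trans (measure_union_le _ _) ?_
  have h0 : volume (S ∩ sphere x r) = 0 :=
    measure_mono_null Set.inter_subset_right (vol_sphere hn x r)
  simp [h0]

lemma vol_cb (hn : 0 < n) (x : Euc n) (r : ℝ) :
    volume (closedBall x r) = volume (ball x r) := by
  simpa using vol_inter_cb hn Set.univ x r

/-- Lebesgue density theorem in our formulation. -/
lemma ae_densityOne (hn : 0 < n) {S : Set (Euc n)} (hS : MeasurableSet S) :
    ∀ᵐ x ∂(volume : Measure (Euc n)), x ∈ S → DensityOneAt S x := by
  filter_upwards [Besicovitch.ae_tendsto_measure_inter_div_of_measurableSet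
    (volume : Measure (Euc n)) hS] with x hx hxS
  have h1 : S.indicator (1 : Euc n → ENNReal) x = 1 := by simp [Set.indicator_of_mem hxS]
  rw [h1] at hx
  refine hx.congr fun r => ?_
  rw [vol_inter_cb hn S x r, vol_cb hn x r]

/-- Real-valued ratio of a set inside balls around `x`. -/
def rat (S : Set (Euc n)) (x : Euc n) (r : ℝ) : ℝ :=
  (volume (S ∩ ball x r)).toReal / (volume (ball x r)).toReal

lemma densityOneAt_iff_rat {S : Set (Euc n)} {x : Euc n} :
    DensityOneAt S x ↔ Tendsto (rat S x) (𝓝[>] (0:ℝ)) (𝓝 1) := by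
  constructor
  · intro h
    have := (ENNReal.tendsto_toReal (by norm_num : (1:ENNReal) ≠ ⊤)).comp h
    simp only [ENNReal.toReal_one] at this
    refine this.congr fun r => ?_
    simp [rat, ENNReal.toReal_div, Function.comp]
  · intro h
    have h2 : Tendsto (fun r => ENNReal.ofReal (rat S x r)) (𝓝[>] (0:ℝ))
        (𝓝 (ENNReal.ofReal 1)) := (ENNReal.continuous_ofReal.tendsto 1).comp h
    simp only [ENNReal.ofReal_one] at h2
    refine h2.congr' ?_
    filter_upwards [self_mem_nhdsWithin] with r (hr : 0 < r)
    have hne : volume (S ∩ ball x r) / volume (ball x r) ≠ ⊤ :=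
      (ENNReal.div_lt_top (ne_top_of_le_ne_top (vol_ball_ne_top x r)
        (measure_mono Set.inter_subset_right)) (vol_ball_ne_zero x hr)).ne
    rw [rat, ← ENNReal.toReal_div, ENNReal.ofReal_toReal hne]

lemma densityZeroAt_iff_rat {S : Set (Euc n)} (hS : MeasurableSet S) {x : Euc n} :
    DensityZeroAt S x ↔ Tendsto (rat S x) (𝓝[>] (0:ℝ)) (𝓝 0) := by
  rw [DensityZeroAt, densityOneAt_iff_rat]
  have hev : (fun r => rat Sᶜ x r) =ᶠ[𝓝[>] (0:ℝ)] (fun r => 1 - rat S x r) := by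
    filter_upwards [self_mem_nhdsWithin] with r (hr : 0 < r)
    have hsub : volume (Sᶜ ∩ ball x r) = volume (ball x r) - volume (S ∩ ball x r) := by
      have : Sᶜ ∩ ball x r = ball x r \ (S ∩ ball x r) := by
        ext y; simp [Set.mem_diff]; tauto
      rw [this, measure_diff Set.inter_subset_right (hS.inter measurableSet_ball).nullMeasurableSet
        (ne_top_of_le_ne_top (vol_ball_ne_top x r) (measure_mono Set.inter_subset_right))]
    have hfin : volume (ball x r) ≠ ⊤ := vol_ball_ne_top x r
    have hle : volume (S ∩ ball x r) ≤ volume (ball x r) :=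
      measure_mono Set.inter_subset_right
    have hpos : (volume (ball x r)).toReal ≠ 0 := by
      refine ne_of_gt (ENNReal.toReal_pos (vol_ball_ne_zero x hr) hfin)
    rw [rat, hsub, ENNReal.toReal_sub_of_le hle hfin, sub_div, div_self hpos, rat]
  constructor
  · intro h
    have h1 : Tendsto (fun r => 1 - rat S x r) (𝓝[>] (0:ℝ)) (𝓝 1) := h.congr' hev
    have := (tendsto_const_nhds (x := (1:ℝ)) (f := 𝓝[>] (0:ℝ))).sub h1
    simpa using this.congr fun r => by ring
  · intro h
    have : Tendsto (fun r => 1 - rat S x r) (𝓝[>] (0:ℝ)) (𝓝 (1 - 0)) :=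
      (tendsto_const_nhds).sub h
    simp only [sub_zero] at this
    exact this.congr' hev.symm

lemma rat_nonneg (S : Set (Euc n)) (x : Euc n) (r : ℝ) : 0 ≤ rat S x r :=
  div_nonneg ENNReal.toReal_nonneg ENNReal.toReal_nonneg

lemma rat_le_one {S : Set (Euc n)} {x : Euc n} {r : ℝ} : rat S x r ≤ 1 := by
  rcases eq_or_ne (volume (ball x r)).toReal 0 with h | h
  · simp [rat, h]
  · rw [rat, div_le_one (lt_of_le_of_ne (ENNReal.toReal_nonneg) (Ne.symm h))]
    exact ENNReal.toReal_mono (vol_ball_ne_top x r)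
      (measure_mono Set.inter_subset_right)

lemma rat_mono {S T : Set (Euc n)} (h : S ⊆ T) (x : Euc n) (r : ℝ) :
    rat S x r ≤ rat T x r := by
  rcases eq_or_ne ((volume (ball x r)).toReal) 0 with h0 | h0
  · simp [rat, h0]
  · have hc : 0 < (volume (ball x r)).toReal :=
      lt_of_le_of_ne ENNReal.toReal_nonneg (Ne.symm h0)
    have hnum : (volume (S ∩ ball x r)).toReal ≤ (volume (T ∩ ball x r)).toReal :=
      ENNReal.toReal_mono (ne_top_of_le_ne_top (vol_ball_ne_top x r)
        (measure_mono Set.inter_subset_right))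
        (measure_mono (Set.inter_subset_inter_left _ h))
    exact div_le_div_of_nonneg_right hnum hc.le

/-- Antitonicity of density-zero (for measurable sets). -/
lemma dz_mono {S T : Set (Euc n)} {x : Euc n} (hS : MeasurableSet S) (hT : MeasurableSet T)
    (hST : S ⊆ T) (h : DensityZeroAt T x) : DensityZeroAt S x := by
  rw [densityZeroAt_iff_rat hS]
  rw [densityZeroAt_iff_rat hT] at h
  exact tendsto_of_tendsto_of_tendsto_of_le_of_le tendsto_const_nhds h
    (fun r => rat_nonneg S x r) (fun r => rat_mono hST x r)

lemma rat_union_le (S T : Set (Euc n)) (x : Euc n) (r : ℝ) :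
    rat (S ∪ T) x r ≤ rat S x r + rat T x r := by
  rcases eq_or_ne ((volume (ball x r)).toReal) 0 with h0 | h0
  · simp [rat, h0]
  · have hc : 0 < (volume (ball x r)).toReal :=
      lt_of_le_of_ne ENNReal.toReal_nonneg (Ne.symm h0)
    rw [rat, rat, rat, ← add_div, div_le_div_iff_of_pos_right hc]
    have h1 : (S ∪ T) ∩ ball x r ⊆ (S ∩ ball x r) ∪ (T ∩ ball x r) := by
      rw [Set.union_inter_distrib_right]
    have h2 : volume ((S ∪ T) ∩ ball x r) ≤
        volume (S ∩ ball x r) + volume (T ∩ ball x r) :=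
      le_trans (measure_mono h1) (measure_union_le _ _)
    have hfS : volume (S ∩ ball x r) ≠ ⊤ :=
      ne_top_of_le_ne_top (vol_ball_ne_top x r) (measure_mono Set.inter_subset_right)
    have hfT : volume (T ∩ ball x r) ≠ ⊤ :=
      ne_top_of_le_ne_top (vol_ball_ne_top x r) (measure_mono Set.inter_subset_right)
    calc (volume ((S ∪ T) ∩ ball x r)).toReal
        ≤ (volume (S ∩ ball x r) + volume (T ∩ ball x r)).toReal :=
          ENNReal.toReal_mono (by finiteness) h2
      _ = (volume (S ∩ ball x r)).toReal + (volume (T ∩ ball x r)).toReal :=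
          ENNReal.toReal_add hfS hfT

/-- Union of two measurable density-zero sets is density-zero. -/
lemma dz_union {S T : Set (Euc n)} {x : Euc n} (hS : MeasurableSet S) (hT : MeasurableSet T)
    (h1 : DensityZeroAt S x) (h2 : DensityZeroAt T x) : DensityZeroAt (S ∪ T) x := by
  rw [densityZeroAt_iff_rat (hS.union hT)]
  rw [densityZeroAt_iff_rat hS] at h1
  rw [densityZeroAt_iff_rat hT] at h2
  have hsum : Tendsto (fun r => rat S x r + rat T x r) (𝓝[>] (0:ℝ)) (𝓝 (0+0)) := h1.add h2
  rw [add_zero] at hsum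
  exact tendsto_of_tendsto_of_tendsto_of_le_of_le tendsto_const_nhds hsum
    (fun r => rat_nonneg _ x r) (fun r => rat_union_le S T x r)

lemma densityOneAt_univ (hn : 0 < n) (x : Euc n) : DensityOneAt (Set.univ : Set (Euc n)) x := by
  rw [densityOneAt_iff_rat]
  refine tendsto_const_nhds.congr' ?_
  filter_upwards [self_mem_nhdsWithin] with r (hr : 0 < r)
  rw [rat, Set.univ_inter, div_self
    (ne_of_gt (ENNReal.toReal_pos (vol_ball_ne_zero x hr) (vol_ball_ne_top x r)))]

end Aux15

/-- **Boundedness reduction** (abelian case). If each truncation `f_h` of `f` admits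
measurable coefficients for its approximate derivatives of order `k`, then so
does `f`. -/
theorem stmt15 (n : ℕ) (hn : 0 < n) (k : ℕ) (f : Euc n → ℝ) (hf : Measurable f)
    (hdiff : ∀ᵐ x₀ ∂(volume : Measure (Euc n)),
      ∃ p : Euc n → ℝ, ApproxDiffAt k Set.univ f x₀ p)
    (ha : ∀ h : ℕ, 1 ≤ h →
      ∃ a' : (Fin n → ℕ) → Euc n → ℝ,
        (∀ J ∈ multiIdxLe n k, Measurable (a' J)) ∧
        ∀ᵐ x₀ ∂(volume : Measure (Euc n)),
          ApproxDiffAt k Set.univ (trunc h f) x₀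
            (fun x => ∑ J ∈ multiIdxLe n k, a' J x₀ * mpow (x - x₀) J)) :
    ∃ a : (Fin n → ℕ) → Euc n → ℝ,
      (∀ J ∈ multiIdxLe n k, Measurable (a J)) ∧
      ∀ᵐ x₀ ∂(volume : Measure (Euc n)),
        ApproxDiffAt k Set.univ f x₀
          (fun x => ∑ J ∈ multiIdxLe n k, a J x₀ * mpow (x - x₀) J) := by
  classical
  have key : ∀ m : ℕ, ∃ a' : (Fin n → ℕ) → Euc n → ℝ,
      (∀ J ∈ multiIdxLe n k, Measurable (a' J)) ∧
      ∀ᵐ x₀ ∂(volume : Measure (Euc n)),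
        ApproxDiffAt k Set.univ (trunc (m+1) f) x₀
          (fun x => ∑ J ∈ multiIdxLe n k, a' J x₀ * mpow (x - x₀) J) :=
    fun m => ha (m+1) (Nat.le_add_left 1 m)
  choose A hAmeas hAae using key
  have hlev : Measurable fun x : Euc n => ⌈|f x|⌉₊ := hf.abs.nat_ceil
  refine ⟨fun J x => A ⌈|f x|⌉₊ J x, ?_, ?_⟩
  · intro J hJ
    intro s hs
    have hpre : (fun x => A ⌈|f x|⌉₊ J x) ⁻¹' s =
        ⋃ c : ℕ, ((fun x : Euc n => ⌈|f x|⌉₊) ⁻¹' {c}) ∩ (A c J ⁻¹' s) := by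
      ext x
      simp only [Set.mem_preimage, Set.mem_iUnion, Set.mem_inter_iff, Set.mem_singleton_iff]
      constructor
      · intro h; exact ⟨⌈|f x|⌉₊, rfl, h⟩
      · rintro ⟨c, hc, h⟩; rwa [hc]
    rw [hpre]
    exact MeasurableSet.iUnion fun c =>
      (hlev (measurableSet_singleton c)).inter (hAmeas c J hJ hs)
  · have hstrip : ∀ᵐ x₀ ∂(volume : Measure (Euc n)), ∀ q r : ℚ,
        x₀ ∈ f ⁻¹' Set.Ioo (q:ℝ) (r:ℝ) → DensityOneAt (f ⁻¹' Set.Ioo (q:ℝ) (r:ℝ)) x₀ := by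
      rw [ae_all_iff]; intro q; rw [ae_all_iff]; intro r
      exact Aux15.ae_densityOne hn (hf measurableSet_Ioo)
    filter_upwards [hstrip, ae_all_iff.2 hAae] with x₀ hx₀S hx₀A
    set m₀ := ⌈|f x₀|⌉₊ with hm₀
    set p' : Euc n → ℝ := fun x => ∑ J ∈ multiIdxLe n k, A m₀ J x₀ * mpow (x - x₀) J with hp'
    have hspec : ApproxDiffAt k Set.univ (trunc (m₀+1) f) x₀ p' := hx₀A m₀
    obtain ⟨q, hq1, hq2⟩ := exists_rat_btwn (show f x₀ - 1 < f x₀ by linarith)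
    obtain ⟨r, hr1, hr2⟩ := exists_rat_btwn (show f x₀ < f x₀ + 1 by linarith)
    have hceil : |f x₀| ≤ (m₀ : ℝ) := Nat.le_ceil _
    have htr : ∀ x : Euc n, f x ∈ Set.Ioo (q:ℝ) (r:ℝ) → trunc (m₀+1) f x = f x := by
      rintro x ⟨h1, h2⟩
      have habs1 : f x₀ ≤ |f x₀| := le_abs_self _
      have habs2 : -|f x₀| ≤ f x₀ := neg_abs_le _
      have hub : f x < ((m₀+1 : ℕ) : ℝ) := by push_cast; linarith
      have hlb : -(((m₀+1 : ℕ)) : ℝ) < f x := by push_cast; linarith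
      simp only [trunc]
      rw [if_neg (not_le.2 hub), if_neg (not_le.2 hlb)]
    -- the exceptional set has density zero
    have hptr : Measurable (trunc (m₀+1) f) := by
      unfold trunc
      exact Measurable.ite (measurableSet_le measurable_const hf) measurable_const
        (Measurable.ite (measurableSet_le hf measurable_const) measurable_const hf)
    have hmE : MeasurableSet {x : Euc n | f x ≠ trunc (m₀+1) f x} :=
      (measurableSet_eq_fun hf hptr).compl
    have hE : DensityZeroAt {x : Euc n | f x ≠ trunc (m₀+1) f x} x₀ := by
      have hcompl : DensityZeroAt (f ⁻¹' Set.Ioo (q:ℝ) (r:ℝ))ᶜ x₀ := by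
        rw [DensityZeroAt, compl_compl]
        exact hx₀S q r ⟨hq2, hr1⟩
      refine Aux15.dz_mono hmE (hf measurableSet_Ioo).compl ?_ hcompl
      intro x hx
      simp only [Set.mem_compl_iff, Set.mem_preimage]
      intro hmem
      exact hx (htr x hmem).symm
    -- continuity of the polynomial
    have hmp : ∀ J : Fin n → ℕ, Continuous fun x : Euc n => mpow (x - x₀) J := by
      intro J
      unfold mpow
      refine continuous_finset_prod _ fun i _ => Continuous.pow ?_ _
      exact ((EuclideanSpace.proj i : Euc n →L[ℝ] ℝ).continuous).comp
        (continuous_id.sub continuous_const)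
    have hp'c : Continuous p' := by
      rw [hp']
      exact continuous_finset_sum _ fun J _ => continuous_const.mul (hmp J)
    have hnormc : ∀ ε : ℝ, Continuous fun x : Euc n => ε * ‖x - x₀‖ ^ k :=
      fun ε => continuous_const.mul (((continuous_id.sub continuous_const).norm).pow k)
    refine ⟨Aux15.densityOneAt_univ hn x₀, hspec.2.1, ?_⟩
    intro ε hε
    have hT1 := hspec.2.2 ε hε
    have hmT1 : MeasurableSet {x : Euc n | x ∈ Set.univ ∧
        ε * ‖x - x₀‖ ^ k < |trunc (m₀+1) f x - p' x|} := by
      have heq : {x : Euc n | x ∈ Set.univ ∧ ε * ‖x - x₀‖ ^ k < |trunc (m₀+1) f x - p' x|}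
          = {x : Euc n | ε * ‖x - x₀‖ ^ k < |trunc (m₀+1) f x - p' x|} := by
        ext x; simp
      rw [heq]
      exact measurableSet_lt (hnormc ε).measurable (hptr.sub hp'c.measurable).abs
    have hmTgt : MeasurableSet {x : Euc n | x ∈ Set.univ ∧
        ε * ‖x - x₀‖ ^ k < |f x - p' x|} := by
      have heq : {x : Euc n | x ∈ Set.univ ∧ ε * ‖x - x₀‖ ^ k < |f x - p' x|}
          = {x : Euc n | ε * ‖x - x₀‖ ^ k < |f x - p' x|} := by
        ext x; simp
      rw [heq]
      exact measurableSet_lt (hnormc ε).measurable (hf.sub hp'c.measurable).abs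
    refine Aux15.dz_mono hmTgt (hmT1.union hmE) ?_ (Aux15.dz_union hmT1 hmE hT1 hE)
    intro x hx
    rcases eq_or_ne (f x) (trunc (m₀+1) f x) with he | he
    · left
      refine ⟨trivial, ?_⟩
      rw [← he]
      exact hx.2
    · right
      exact he
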